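/- Let Π ∈ M_m(ℝ) be a constant skew-symmetric matrix (Πᵀ = −Π), let H : ℝ^m → ℝ be of class C², let h ∈ ℝ, and let φ : ℝ^m → ℝ^m be a differentiable map satisfying the implicit midpoint relation φ(z) = z + h Π ∇H((z + φ(z))/2) for all z. Fix z ∈ ℝ^m and suppose the matrix I − (h/2) Π ∇²H(m) is invertible, where m = (z + φ(z))/2 and ∇²H(m) is the Hessian matrix of H at m. Then Dφ(z) Π Dφ(z)ᵀ = Π, i.e. the midpoint rule is a Poisson map for the constant Poisson structure Π. -/

import Mathlib

open Matrix

/-- The Euclidean gradient of `H : ℝ^m → ℝ` at `z`. -/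
noncomputable def grad {m : ℕ} (H : (Fin m → ℝ) → ℝ) (z : Fin m → ℝ) : Fin m → ℝ :=
  fun i => fderiv ℝ H z (Pi.single i 1)

/-- The Jacobian matrix of `φ : ℝ^{m₁} → ℝ^{m₂}` at `z`. -/
noncomputable def jacobian {m₁ m₂ : ℕ} (φ : (Fin m₁ → ℝ) → (Fin m₂ → ℝ)) (z : Fin m₁ → ℝ) :
    Matrix (Fin m₂) (Fin m₁) ℝ :=
  Matrix.of fun i j => fderiv ℝ φ z (Pi.single j 1) i

/-- The Hessian matrix of `H : ℝ^m → ℝ` at `z`. -/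
noncomputable def hessian {m : ℕ} (H : (Fin m → ℝ) → ℝ) (z : Fin m → ℝ) :
    Matrix (Fin m) (Fin m) ℝ :=
  Matrix.of fun i j => fderiv ℝ (fun w => grad H w i) z (Pi.single j 1)

/-- A CLM between pi types is mulVec by its matrix. -/
lemma clm_apply_eq_mulVec {m₁ m₂ : ℕ} (L : (Fin m₁ → ℝ) →L[ℝ] (Fin m₂ → ℝ)) (v : Fin m₁ → ℝ) :
    L v = (Matrix.of fun i j => L (Pi.single j 1) i) *ᵥ v := by
  have hv : v = ∑ j, v j • (Pi.single j (1 : ℝ) : Fin m₁ → ℝ) := by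
    funext k
    simp [Finset.sum_apply, Pi.single_apply]
  conv_lhs => rw [hv]
  rw [map_sum]
  funext i
  simp only [Finset.sum_apply, _root_.map_smul, Pi.smul_apply, smul_eq_mul, Matrix.mulVec,
    dotProduct, Matrix.of_apply]
  exact Finset.sum_congr rfl fun j _ => mul_comm _ _

lemma grad_component_differentiable {m : ℕ} {H : (Fin m → ℝ) → ℝ} (hH : ContDiff ℝ 2 H)
    (i : Fin m) : Differentiable ℝ (fun w => grad H w i) := by
  have h1 : ContDiff ℝ 1 (fderiv ℝ H) := hH.fderiv_right (by norm_num)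
  exact (ContinuousLinearMap.apply ℝ ℝ (Pi.single i (1:ℝ))).differentiable.comp
    (h1.differentiable (by norm_num))

lemma grad_differentiable {m : ℕ} {H : (Fin m → ℝ) → ℝ} (hH : ContDiff ℝ 2 H) :
    Differentiable ℝ (grad H) := by
  intro w
  exact differentiableAt_pi.mpr fun i => (grad_component_differentiable hH i) w

lemma jacobian_grad_eq_hessian {m : ℕ} {H : (Fin m → ℝ) → ℝ} (hH : ContDiff ℝ 2 H)
    (w : Fin m → ℝ) : jacobian (grad H) w = hessian H w := by
  ext i j
  simp only [jacobian, hessian, Matrix.of_apply]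
  rw [fderiv_pi (fun i => (grad_component_differentiable hH i) w)]
  rfl

lemma hessian_symm {m : ℕ} {H : (Fin m → ℝ) → ℝ} (hH : ContDiff ℝ 2 H) (w : Fin m → ℝ) :
    (hessian H w)ᵀ = hessian H w := by
  have h1 : ContDiff ℝ 1 (fderiv ℝ H) := hH.fderiv_right (by norm_num)
  have hf'' : HasFDerivAt (fderiv ℝ H) (fderiv ℝ (fderiv ℝ H) w) w :=
    ((h1.differentiable (by norm_num)) w).hasFDerivAt
  have hcomp : ∀ a : Fin m, fderiv ℝ (fun u => grad H u a) w =
      (ContinuousLinearMap.apply ℝ ℝ (Pi.single a (1:ℝ))).comp (fderiv ℝ (fderiv ℝ H) w) := by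
    intro a
    exact (((ContinuousLinearMap.apply ℝ ℝ (Pi.single a (1:ℝ))).hasFDerivAt).comp w hf'').fderiv
  have hsymm : IsSymmSndFDerivAt ℝ H w :=
    (hH.contDiffAt).isSymmSndFDerivAt (by simp [minSmoothness_of_isRCLikeNormedField])
  ext i j
  simp only [Matrix.transpose_apply, hessian, Matrix.of_apply, hcomp,
    ContinuousLinearMap.comp_apply, ContinuousLinearMap.apply_apply]
  exact hsymm (Pi.single i 1) (Pi.single j 1)

/-- For a constant skew-symmetric structure matrix `Π`, the implicit midpoint rule
`φ(z) = z + h Π ∇H((z + φ(z))/2)` is a Poisson map: `Dφ(z) Π Dφ(z)ᵀ = Π` (at any point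
`z` where `I − (h/2) Π ∇²H(m)` is invertible, `m` being the midpoint). -/
theorem midpoint_rule_is_poisson {m : ℕ}
    (P : Matrix (Fin m) (Fin m) ℝ) (hskew : Pᵀ = -P)
    (H : (Fin m → ℝ) → ℝ) (hH : ContDiff ℝ 2 H)
    (h : ℝ) (φ : (Fin m → ℝ) → (Fin m → ℝ)) (hφ : Differentiable ℝ φ)
    (hmid : ∀ z, φ z = z + h • (P *ᵥ grad H ((1 / 2 : ℝ) • (z + φ z))))
    (z : Fin m → ℝ)
    (hinv : IsUnit ((1 : Matrix (Fin m) (Fin m) ℝ)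
      - (h / 2) • (P * hessian H ((1 / 2 : ℝ) • (z + φ z))))) :
    jacobian φ z * P * (jacobian φ z)ᵀ = P := by
  classical
  set μ : Fin m → ℝ := (1 / 2 : ℝ) • (z + φ z) with hμdef
  set S : Matrix (Fin m) (Fin m) ℝ := hessian H μ with hSdef
  set J : Matrix (Fin m) (Fin m) ℝ := jacobian φ z with hJdef
  -- the continuous linear map u ↦ h • (P *ᵥ u)
  set M : (Fin m → ℝ) →L[ℝ] (Fin m → ℝ) :=
    h • (LinearMap.toContinuousLinearMap (Matrix.mulVecLin P)) with hMdef
  have hM : ∀ u, M u = h • (P *ᵥ u) := fun u => by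
    simp [hMdef, Matrix.mulVecLin_apply]
  -- fderiv's as mulVec
  have hD : ∀ v, fderiv ℝ φ z v = J *ᵥ v := fun v => clm_apply_eq_mulVec _ v
  have hDG : ∀ v, fderiv ℝ (grad H) μ v = S *ᵥ v := fun v => by
    rw [clm_apply_eq_mulVec (fderiv ℝ (grad H) μ) v]
    rw [show (Matrix.of fun i j => fderiv ℝ (grad H) μ (Pi.single j 1) i) = jacobian (grad H) μ
        from rfl, jacobian_grad_eq_hessian hH μ]
  -- chain rule
  set Lψ : (Fin m → ℝ) →L[ℝ] (Fin m → ℝ) :=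
    (1 / 2 : ℝ) • (ContinuousLinearMap.id ℝ (Fin m → ℝ) + fderiv ℝ φ z) with hLψdef
  have hψz : HasFDerivAt (fun w => (1 / 2 : ℝ) • (w + φ w)) Lψ z :=
    ((hasFDerivAt_id z).add (hφ z).hasFDerivAt).const_smul (1 / 2 : ℝ)
  have hGψ : HasFDerivAt (grad H) (fderiv ℝ (grad H) μ) μ :=
    ((grad_differentiable hH) μ).hasFDerivAt
  have hchain : HasFDerivAt (fun w => grad H ((1 / 2 : ℝ) • (w + φ w)))
      ((fderiv ℝ (grad H) μ).comp Lψ) z := by have := hGψ.comp z hψz; exact this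
  have hF : HasFDerivAt (fun w => w + M (grad H ((1 / 2 : ℝ) • (w + φ w))))
      (ContinuousLinearMap.id ℝ (Fin m → ℝ) + M.comp ((fderiv ℝ (grad H) μ).comp Lψ)) z :=
    (hasFDerivAt_id z).add (M.hasFDerivAt.comp z hchain)
  have hφeq : φ = fun w => w + M (grad H ((1 / 2 : ℝ) • (w + φ w))) := by
    funext w
    rw [hM]
    conv_lhs => rw [hmid w]
  have hφF : HasFDerivAt φ
      (ContinuousLinearMap.id ℝ (Fin m → ℝ) + M.comp ((fderiv ℝ (grad H) μ).comp Lψ)) z := by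
    rw [hφeq]; exact hF
  have hDeq : fderiv ℝ φ z
      = ContinuousLinearMap.id ℝ (Fin m → ℝ) + M.comp ((fderiv ℝ (grad H) μ).comp Lψ) :=
    hφF.fderiv
  -- the key pointwise identity
  have key : ∀ v, J *ᵥ v = v + h • (P *ᵥ (S *ᵥ ((1 / 2 : ℝ) • (v + J *ᵥ v)))) := by
    intro v
    have e1 : J *ᵥ v = fderiv ℝ φ z v := (hD v).symm
    rw [e1]
    conv_lhs => rw [hDeq]
    simp only [ContinuousLinearMap.add_apply, ContinuousLinearMap.comp_apply,
      ContinuousLinearMap.id_apply, hLψdef, ContinuousLinearMap.smul_apply, hM, hDG, hD]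
  -- vector form of the matrix equation
  have hvec : ∀ v, J *ᵥ v = (1 + ((h / 2) • (P * S)) * (1 + J)) *ᵥ v := by
    intro v
    rw [key v, Matrix.add_mulVec, Matrix.one_mulVec, ← Matrix.mulVec_mulVec,
      Matrix.smul_mulVec, ← Matrix.mulVec_mulVec, Matrix.add_mulVec, Matrix.one_mulVec,
      Matrix.mulVec_smul, Matrix.mulVec_smul, smul_smul,
      show h * (1 / 2 : ℝ) = h / 2 by ring]
  have hmat : J = 1 + ((h / 2) • (P * S)) * (1 + J) := by
    ext i j
    have := congrFun (hvec (Pi.single j 1)) i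
    simpa using this
  -- matrix algebra
  set A : Matrix (Fin m) (Fin m) ℝ := (h / 2) • (P * S) with hAdef
  have hBJ : (1 - A) * J = 1 + A := by
    have h1 : J = 1 + (A + A * J) := by
      conv_lhs => rw [hmat]
      rw [mul_add, mul_one]
    calc (1 - A) * J = J - A * J := by rw [sub_mul, one_mul]
      _ = 1 + A := by nth_rewrite 1 [h1]; abel
  have hdet : IsUnit (1 - A).det := (Matrix.isUnit_iff_isUnit_det _).mp hinv
  have hJf : J = (1 - A)⁻¹ * (1 + A) := by
    rw [← hBJ, ← Matrix.mul_assoc, Matrix.nonsing_inv_mul _ hdet, Matrix.one_mul]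
  have hS : Sᵀ = S := hessian_symm hH μ
  have hPA : P * Aᵀ = -(A * P) := by
    rw [hAdef, Matrix.transpose_smul, Matrix.transpose_mul, hS, hskew]
    simp [Matrix.mul_smul, Matrix.smul_mul, Matrix.mul_assoc]
  have hsum : A * P + P * Aᵀ = 0 := by rw [hPA]; simp
  have hcentral : (1 + A) * P * (1 + A)ᵀ = (1 - A) * P * (1 - A)ᵀ := by
    rw [Matrix.transpose_add, Matrix.transpose_sub, Matrix.transpose_one]
    have e1 : (1 + A) * P * (1 + Aᵀ) = P + (A * P + P * Aᵀ) + A * (P * Aᵀ) := by noncomm_ring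
    have e2 : (1 - A) * P * (1 - Aᵀ) = P - (A * P + P * Aᵀ) + A * (P * Aᵀ) := by noncomm_ring
    rw [e1, e2, hsum, add_zero, sub_zero]
  have hdetT : IsUnit ((1 - A)ᵀ).det := Matrix.isUnit_det_transpose _ hdet
  rw [hJf, Matrix.transpose_mul, Matrix.transpose_nonsing_inv]
  have e3 : (1 - A)⁻¹ * (1 + A) * P * ((1 + A)ᵀ * ((1 - A)ᵀ)⁻¹)
      = (1 - A)⁻¹ * ((1 + A) * P * (1 + A)ᵀ) * ((1 - A)ᵀ)⁻¹ := by
    simp [Matrix.mul_assoc]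
  rw [e3, hcentral]
  rw [show (1 - A) * P * (1 - A)ᵀ = (1 - A) * (P * (1 - A)ᵀ) from Matrix.mul_assoc _ _ _,
    ← Matrix.mul_assoc ((1 - A)⁻¹), Matrix.nonsing_inv_mul _ hdet, Matrix.one_mul,
    Matrix.mul_assoc, Matrix.mul_nonsing_inv _ hdetT, Matrix.mul_one]
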